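/- arXiv:2005.12248 — 4 statements merged into one kernel-verified Lean document; each statement's English description precedes it below -/
import Mathlib

section
/- Fix a positive integer n. There is a unique function c_n : {divisors of n} → ℚ satisfying ∑_{d∣n} gcd(t,d)·c_n(d) = n/t for every divisor t of n. -/
open Finset

/-- gcd identity: for divisors `t, d` of `n`,
`gcd t d = ∑_{e ∣ n} [e ∣ t][e ∣ d] φ(e)`. -/
lemma gcd_eq_sum_totient_aux (n : ℕ) (hn : n ≠ 0) {t d : ℕ}
    (ht : t ∈ n.divisors) (hd : d ∈ n.divisors) :
    (Nat.gcd t d : ℚ) =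
      ∑ e ∈ n.divisors,
        (if e ∣ t then (1 : ℚ) else 0) * (if e ∣ d then (1 : ℚ) else 0) *
          ((Nat.totient e : ℚ)) := by
  have htn : t ∣ n := (Nat.mem_divisors.mp ht).1
  have hg : Nat.gcd t d ∣ n := (Nat.gcd_dvd_left t d).trans htn
  have hfil : {e ∈ n.divisors | e ∣ Nat.gcd t d} = (Nat.gcd t d).divisors :=
    Nat.divisors_filter_dvd_of_dvd hn hg
  have hsum : ∑ e ∈ (Nat.gcd t d).divisors, (Nat.totient e : ℚ) = (Nat.gcd t d : ℚ) := by
    rw [← Nat.cast_sum]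
    exact_mod_cast congrArg (Nat.cast (R := ℚ)) (Nat.sum_totient (Nat.gcd t d))
  rw [← hsum, ← hfil, Finset.sum_filter]
  apply Finset.sum_congr rfl
  intro e _
  by_cases h1 : e ∣ t <;> by_cases h2 : e ∣ d <;>
    simp [h1, h2, Nat.dvd_gcd_iff]

/-- Downward induction: if all "multiple-sums" vanish, the function vanishes on divisors. -/
lemma inv_aux (n : ℕ) (hn : 0 < n) (c : ℕ → ℚ)
    (hS : ∀ e ∈ n.divisors, ∑ d ∈ n.divisors with e ∣ d, c d = 0) :
    ∀ e ∈ n.divisors, c e = 0 := by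
  have key : ∀ k : ℕ, ∀ e ∈ n.divisors, n / e = k → c e = 0 := by
    intro k
    induction k using Nat.strong_induction_on with
    | _ k ih =>
      intro e he hk
      have hen : e ∣ n := (Nat.mem_divisors.mp he).1
      have he0 : 0 < e := Nat.pos_of_mem_divisors he
      have hsplit := hS e he
      have hemem : e ∈ n.divisors.filter (fun d => e ∣ d) := by
        simp [he]
      rw [← Finset.add_sum_erase _ _ hemem] at hsplit
      have hrest : ∑ d ∈ (n.divisors.filter (fun d => e ∣ d)).erase e, c d = 0 := by
        apply Finset.sum_eq_zero
        intro d hd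
        have hd' := Finset.mem_of_mem_erase hd
        have hdne : d ≠ e := Finset.ne_of_mem_erase hd
        rw [Finset.mem_filter] at hd'
        obtain ⟨hdn, hed⟩ := hd'
        have hdnn : d ∣ n := (Nat.mem_divisors.mp hdn).1
        have hd0 : 0 < d := Nat.pos_of_mem_divisors hdn
        have helt : e < d := lt_of_le_of_ne (Nat.le_of_dvd hd0 hed) (Ne.symm hdne)
        have hlt : n / d < n / e := by
          have h1 : n / d * d = n := Nat.div_mul_cancel hdnn
          have h2 : n / e * e = n := Nat.div_mul_cancel hen
          have h3 : 0 < n / d := Nat.div_pos (Nat.le_of_dvd hn hdnn) hd0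
          nlinarith [h1, h2, h3, he0, helt]
        exact ih (n / d) (hk ▸ hlt) d hdn rfl
      rw [hrest, add_zero] at hsplit
      exact hsplit
  intro e he
  exact key (n / e) e he rfl

/-- For a positive integer `n` there is a unique function `c_n` on the
divisors of `n` (encoded as a function `ℕ → ℚ` vanishing off the divisors) with
`∑_{d ∣ n} gcd(t,d) · c_n(d) = n / t` for every divisor `t` of `n`. -/
theorem exists_unique_cn (n : ℕ) (hn : 0 < n) :
    ∃! c : ℕ → ℚ, (∀ d, d ∉ n.divisors → c d = 0) ∧
      ∀ t ∈ n.divisors, ∑ d ∈ n.divisors, (Nat.gcd t d : ℚ) * c d = (n : ℚ) / t := by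
  classical
  have hn0 : n ≠ 0 := hn.ne'
  set s := n.divisors with hs
  -- the gcd matrix on divisors
  set M : Matrix s s ℚ := fun t d => (Nat.gcd (t : ℕ) (d : ℕ) : ℚ) with hM
  -- injectivity of the linear map
  have hinj : Function.Injective M.mulVecLin := by
    rw [injective_iff_map_eq_zero]
    intro v hv
    -- quadratic form computation
    have hq : ∑ e : s, (Nat.totient (e : ℕ) : ℚ) *
        (∑ t : s, (if (e : ℕ) ∣ (t : ℕ) then (1 : ℚ) else 0) * v t) ^ 2 = 0 := by
      have step2 : ∑ t : s, v t * (M.mulVecLin v t) = 0 := by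
        rw [hv]; simp
      have step1 : ∀ t : s, v t * (M.mulVecLin v t) =
          ∑ d : s, ∑ e : s, ((if (e : ℕ) ∣ (t : ℕ) then (1 : ℚ) else 0) *
              (if (e : ℕ) ∣ (d : ℕ) then (1 : ℚ) else 0) *
              (Nat.totient (e : ℕ) : ℚ) * v t * v d) := by
        intro t
        simp only [Matrix.mulVecLin_apply, Matrix.mulVec, dotProduct]
        rw [Finset.mul_sum]
        apply Finset.sum_congr rfl
        intro d _
        have hgcd := gcd_eq_sum_totient_aux n hn0 t.2 d.2
        rw [← Finset.sum_coe_sort] at hgcd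
        show v t * ((Nat.gcd (t : ℕ) (d : ℕ) : ℚ) * v d) = _
        rw [hgcd, Finset.sum_mul, Finset.mul_sum]
        exact Finset.sum_congr rfl (fun e _ => by ring)
      have e1 : ∑ t : s, v t * (M.mulVecLin v t) =
          ∑ t : s, ∑ d : s, ∑ e : s, ((if (e : ℕ) ∣ (t : ℕ) then (1 : ℚ) else 0) *
              (if (e : ℕ) ∣ (d : ℕ) then (1 : ℚ) else 0) *
              (Nat.totient (e : ℕ) : ℚ) * v t * v d) :=
        Finset.sum_congr rfl (fun t _ => step1 t)
      have e2 : (∑ t : s, ∑ d : s, ∑ e : s, ((if (e : ℕ) ∣ (t : ℕ) then (1 : ℚ) else 0) *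
              (if (e : ℕ) ∣ (d : ℕ) then (1 : ℚ) else 0) *
              (Nat.totient (e : ℕ) : ℚ) * v t * v d)) =
          ∑ t : s, ∑ e : s, ∑ d : s, ((if (e : ℕ) ∣ (t : ℕ) then (1 : ℚ) else 0) *
              (if (e : ℕ) ∣ (d : ℕ) then (1 : ℚ) else 0) *
              (Nat.totient (e : ℕ) : ℚ) * v t * v d) :=
        Finset.sum_congr rfl (fun t _ => Finset.sum_comm)
      have e3 : (∑ t : s, ∑ e : s, ∑ d : s, ((if (e : ℕ) ∣ (t : ℕ) then (1 : ℚ) else 0) *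
              (if (e : ℕ) ∣ (d : ℕ) then (1 : ℚ) else 0) *
              (Nat.totient (e : ℕ) : ℚ) * v t * v d)) =
          ∑ e : s, ∑ t : s, ∑ d : s, ((if (e : ℕ) ∣ (t : ℕ) then (1 : ℚ) else 0) *
              (if (e : ℕ) ∣ (d : ℕ) then (1 : ℚ) else 0) *
              (Nat.totient (e : ℕ) : ℚ) * v t * v d) :=
        Finset.sum_comm
      have e4 : (∑ e : s, ∑ t : s, ∑ d : s, ((if (e : ℕ) ∣ (t : ℕ) then (1 : ℚ) else 0) *
              (if (e : ℕ) ∣ (d : ℕ) then (1 : ℚ) else 0) *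
              (Nat.totient (e : ℕ) : ℚ) * v t * v d)) =
          ∑ e : s, (Nat.totient (e : ℕ) : ℚ) *
            (∑ t : s, (if (e : ℕ) ∣ (t : ℕ) then (1 : ℚ) else 0) * v t) ^ 2 := by
        apply Finset.sum_congr rfl
        intro e _
        rw [sq, Finset.sum_mul_sum, Finset.mul_sum]
        apply Finset.sum_congr rfl
        intro t _
        rw [Finset.mul_sum]
        exact Finset.sum_congr rfl (fun d _ => by ring)
      rw [← e4, ← e3, ← e2, ← e1, step2]
    -- each summand is nonnegative, hence zero
    have hterm : ∀ e : s, (Nat.totient (e : ℕ) : ℚ) *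
        (∑ t : s, (if (e : ℕ) ∣ (t : ℕ) then (1 : ℚ) else 0) * v t) ^ 2 = 0 := by
      have hnonneg : ∀ e : s, e ∈ (Finset.univ : Finset s) →
          (0 : ℚ) ≤ (Nat.totient (e : ℕ) : ℚ) *
            (∑ t : s, (if (e : ℕ) ∣ (t : ℕ) then (1 : ℚ) else 0) * v t) ^ 2 := by
        intro e _
        exact mul_nonneg (by positivity) (sq_nonneg _)
      intro e
      exact (Finset.sum_eq_zero_iff_of_nonneg hnonneg).mp hq e (Finset.mem_univ e)
    have hSzero : ∀ e : s, ∑ t : s, (if (e : ℕ) ∣ (t : ℕ) then (1 : ℚ) else 0) * v t = 0 := by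
      intro e
      have hφ : (0 : ℚ) < (Nat.totient (e : ℕ) : ℚ) := by
        have := Nat.totient_pos.mpr (Nat.pos_of_mem_divisors e.2)
        exact_mod_cast this
      have := hterm e
      rcases mul_eq_zero.mp this with h | h
      · exact absurd h hφ.ne'
      · exact pow_eq_zero_iff (by norm_num) |>.mp h
    -- extend v to ℕ → ℚ and use the inversion lemma
    set c : ℕ → ℚ := fun d => if h : d ∈ s then v ⟨d, h⟩ else 0 with hc
    have hvc : ∀ t : s, v t = c (t : ℕ) := by
      intro t; rw [hc]; simp
    have hSfil : ∀ e ∈ n.divisors, ∑ d ∈ n.divisors with e ∣ d, c d = 0 := by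
      intro e he
      have := hSzero ⟨e, he⟩
      rw [Finset.sum_congr rfl (fun t _ => by rw [hvc t])] at this
      rw [Finset.sum_coe_sort s (fun t => (if e ∣ t then (1 : ℚ) else 0) * c t)] at this
      rw [← this, Finset.sum_filter]
      apply Finset.sum_congr rfl
      intro d _
      by_cases h : e ∣ d <;> simp [h]
    have hc0 := inv_aux n hn c hSfil
    funext t
    rw [hvc t]
    exact hc0 (t : ℕ) t.2
  have hsurj : Function.Surjective M.mulVecLin :=
    LinearMap.injective_iff_surjective.mp hinj
  -- target vector
  set b : s → ℚ := fun t => (n : ℚ) / (t : ℕ) with hb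
  obtain ⟨v, hvb⟩ := hsurj b
  -- the solution
  set c : ℕ → ℚ := fun d => if h : d ∈ s then v ⟨d, h⟩ else 0 with hc
  have hvc : ∀ t : s, v t = c (t : ℕ) := by
    intro t; rw [hc]; simp
  have hsum_eq : ∀ (w : ℕ → ℚ) (t : ℕ) (ht : t ∈ n.divisors),
      ∑ d ∈ n.divisors, (Nat.gcd t d : ℚ) * w d =
        M.mulVecLin (fun d : s => w (d : ℕ)) ⟨t, ht⟩ := by
    intro w t ht
    simp only [Matrix.mulVecLin_apply, Matrix.mulVec, dotProduct, hM]
    rw [← Finset.sum_coe_sort s (fun d => (Nat.gcd t d : ℚ) * w d)]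
    rfl
  refine ⟨c, ⟨fun d hd => by rw [hc]; simp [hd], ?_⟩, ?_⟩
  · intro t ht
    rw [hsum_eq c t ht]
    have : (fun d : s => c (d : ℕ)) = v := by
      funext d; rw [hvc d]
    rw [this, hvb]
  · rintro y ⟨hy0, hy⟩
    have hry : M.mulVecLin (fun d : s => y (d : ℕ)) = b := by
      funext t
      rw [← hsum_eq y t t.2, hy t t.2]
    have hrv : (fun d : s => y (d : ℕ)) = v := by
      apply hinj
      rw [hry, hvb]
    funext d
    by_cases hd : d ∈ s
    · have := congrFun hrv ⟨d, hd⟩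
      simp only at this
      rw [this, hvc]
    · rw [hy0 d (by rwa [hs] at hd), hc]
      simp [hd]
end

section
/- Let D > 24 be an integer and suppose a multiset of pairs (h_i, k_i) of positive integers (dual Coxeter numbers and levels of simple ideals g_i) satisfies h_i/k_i = (D−24)/24 for all i, together with (h_i)² < 4·dim(g_i) and ∑ dim(g_i) = D. Then D ≤ 1128. In particular, only finitely many values of D are possible. -/
/-- The pairs `(d, h)` of dimension and dual Coxeter number of the finite-dimensional
simple complex Lie algebras: `A_l` (l ≥ 1), `B_l` (l ≥ 2), `C_l` (l ≥ 3), `D_l` (l ≥ 4),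
`E₆`, `E₇`, `E₈`, `F₄`, `G₂`. -/
def IsSimpleLieDimCoxeter (d h : ℕ) : Prop :=
  (∃ l, 1 ≤ l ∧ d = l ^ 2 + 2 * l ∧ h = l + 1) ∨
  (∃ l, 2 ≤ l ∧ d = 2 * l ^ 2 + l ∧ h = 2 * l - 1) ∨
  (∃ l, 3 ≤ l ∧ d = 2 * l ^ 2 + l ∧ h = l + 1) ∨
  (∃ l, 4 ≤ l ∧ d = 2 * l ^ 2 - l ∧ h = 2 * l - 2) ∨
  (d = 78 ∧ h = 12) ∨ (d = 133 ∧ h = 18) ∨ (d = 248 ∧ h = 30) ∨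
  (d = 52 ∧ h = 9) ∨ (d = 14 ∧ h = 4)

lemma coxeter_le_of_dim_le (d h : ℕ) (hl : IsSimpleLieDimCoxeter d h)
    (hle : d ≤ 24 + 24 * h) : h ≤ 46 := by
  rcases hl with ⟨l, h1, hd, hh⟩ | ⟨l, h1, hd, hh⟩ | ⟨l, h1, hd, hh⟩ | ⟨l, h1, hd, hh⟩ |
    ⟨hd, hh⟩ | ⟨hd, hh⟩ | ⟨hd, hh⟩ | ⟨hd, hh⟩ | ⟨hd, hh⟩ <;> subst hd hh
  · -- A_l : l² + 2l ≤ 24 + 24(l+1) ⟹ l ≤ 24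
    nlinarith
  · -- B_l : 2l² + l ≤ 24 + 24(2l-1) ⟹ l ≤ 23
    have : 2 * l - 1 + 1 = 2 * l := by omega
    have h2 : 24 + 24 * (2 * l - 1) = 48 * l := by omega
    rw [h2] at hle
    nlinarith
  · -- C_l : 2l² + l ≤ 24 + 24(l+1) ⟹ l ≤ 13
    nlinarith
  · -- D_l : 2l² - l ≤ 24 + 24(2l-2) ⟹ l ≤ 24
    have h2 : 24 + 24 * (2 * l - 2) = 48 * l - 24 := by omega
    have hl2 : l ≤ 2 * l ^ 2 := by nlinarith
    have h3 : 2 * l ^ 2 - l + l = 2 * l ^ 2 := Nat.sub_add_cancel hl2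
    have h4 : 2 * l ^ 2 ≤ 48 * l - 24 + l := by omega
    have h5 : 48 * l - 24 + l = 49 * l - 24 := by omega
    have h6 : 2 * l ^ 2 + 24 ≤ 49 * l := by omega
    have : l ≤ 24 := by nlinarith
    omega
  all_goals omega

/-- if `D > 24`, the simple ideals `g_i` (with dimensions `d i` and dual
Coxeter numbers `h i`) and levels `k i ∈ ℤ_{>0}` satisfy `h i / k i = (D-24)/24`,
`(h i)² < 4·dim g_i` and `∑ dim g_i = D`, then `D ≤ 1128`. -/
theorem dim_bound_1128 (D : ℤ) (hD : 24 < D) (r : ℕ) (hr : 1 ≤ r)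
    (d h k : Fin r → ℕ) (hk : ∀ i, 0 < k i)
    (hLie : ∀ i, IsSimpleLieDimCoxeter (d i) (h i))
    (hratio : ∀ i, (h i : ℚ) / (k i : ℚ) = ((D : ℚ) - 24) / 24)
    (hineq : ∀ i, (h i) ^ 2 < 4 * d i)
    (hsum : (∑ i, (d i : ℤ)) = D) :
    D ≤ 1128 := by
  have i : Fin r := ⟨0, hr⟩
  -- From the ratio: 24 * h i = k i * (D - 24)
  have hk0 : (k i : ℚ) ≠ 0 := by
    exact_mod_cast (hk i).ne'
  have hr1 := hratio i
  rw [div_eq_div_iff hk0 (by norm_num)] at hr1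
  have hk1 : (1 : ℚ) ≤ (k i : ℚ) := by exact_mod_cast hk i
  have hDq : (24 : ℚ) < (D : ℚ) := by exact_mod_cast hD
  -- D - 24 ≤ 24 * h i
  have hbound : (D : ℚ) ≤ 24 + 24 * (h i : ℚ) := by nlinarith
  have hboundZ : D ≤ 24 + 24 * (h i : ℤ) := by exact_mod_cast hbound
  -- d i ≤ D
  have hdle : (d i : ℤ) ≤ D := by
    rw [← hsum]
    exact Finset.single_le_sum (f := fun j => (d j : ℤ))
      (fun j _ => Int.ofNat_nonneg _) (Finset.mem_univ i)
  have hdle' : (d i : ℤ) ≤ 24 + 24 * (h i : ℤ) := le_trans hdle hboundZ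
  have hdleN : d i ≤ 24 + 24 * h i := by exact_mod_cast hdle'
  have h46 : h i ≤ 46 := coxeter_le_of_dim_le (d i) (h i) (hLie i) hdleN
  have : (h i : ℤ) ≤ 46 := by exact_mod_cast h46
  linarith
end

section
/- For the simple Lie algebra sl₂ (type A₁) with Cartan subalgebra h, the inner automorphism exp(ad_{2πi·ρ/h∨}) has order exactly 2, where ρ is the Weyl vector and h∨ = 2 is the dual Coxeter number; more generally, for a simply-laced simple Lie algebra g the automorphism exp(ad_{2πi·ρ/h∨}) has order exactly h∨. -/
open scoped RealInnerProductSpace BigOperators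

/-- The root-system data of a finite-dimensional simple complex Lie algebra of rank `n`:
an irreducible reduced crystallographic root system `Φ` in Euclidean space `ℝ^n`, with
the invariant bilinear form normalised so that long roots have squared norm `2`,
together with a system of positive roots `Pos` and the highest root `θ`. -/
structure IrreducibleRootSystemData (n : ℕ) where
  Φ : Finset (EuclideanSpace ℝ (Fin n))
  Pos : Finset (EuclideanSpace ℝ (Fin n))
  θ : EuclideanSpace ℝ (Fin n)
  nonempty : Φ.Nonempty
  zero_not_mem : (0 : EuclideanSpace ℝ (Fin n)) ∉ Φ
  span_eq_top : Submodule.span ℝ (Φ : Set (EuclideanSpace ℝ (Fin n))) = ⊤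
  neg_mem : ∀ α ∈ Φ, -α ∈ Φ
  reduced : ∀ α ∈ Φ, ∀ t : ℝ, t • α ∈ Φ → t = 1 ∨ t = -1
  integral : ∀ α ∈ Φ, ∀ β ∈ Φ, ∃ k : ℤ, 2 * ⟪β, α⟫ / ⟪α, α⟫ = (k : ℝ)
  reflect_mem : ∀ α ∈ Φ, ∀ β ∈ Φ, β - (2 * ⟪β, α⟫ / ⟪α, α⟫) • α ∈ Φ
  irreducible : ∀ Φ₁ Φ₂ : Finset (EuclideanSpace ℝ (Fin n)), Φ₁ ⊆ Φ → Φ₂ ⊆ Φ →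
    (∀ α ∈ Φ, α ∈ Φ₁ ∨ α ∈ Φ₂) → (∀ α ∈ Φ₁, ∀ β ∈ Φ₂, ⟪α, β⟫ = 0) → Φ₁ = ∅ ∨ Φ₂ = ∅
  norm_le_two : ∀ α ∈ Φ, ⟪α, α⟫ ≤ 2
  exists_long : ∃ α ∈ Φ, ⟪α, α⟫ = 2
  pos_subset : Pos ⊆ Φ
  pos_iff : ∀ α ∈ Φ, (α ∈ Pos ↔ -α ∉ Pos)
  pos_add : ∀ α ∈ Pos, ∀ β ∈ Pos, α + β ∈ Φ → α + β ∈ Pos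
  θ_mem : θ ∈ Pos
  θ_long : ⟪θ, θ⟫ = 2
  θ_highest : ∀ α ∈ Pos, θ + α ∉ Φ

namespace IrreducibleRootSystemData

variable {n : ℕ} (R : IrreducibleRootSystemData n)

/-- The Weyl vector `ρ`, the half sum of the positive roots. -/
noncomputable def weylVector : EuclideanSpace ℝ (Fin n) := ((1 : ℝ) / 2) • ∑ α ∈ R.Pos, α

/-- The dual Coxeter number `h∨ = 1 + (ρ, θ)` (here `θ∨ = θ` since `(θ,θ) = 2`). -/
noncomputable def dualCoxeter : ℝ := 1 + ⟪R.weylVector, R.θ⟫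

/-- The dimension of the Lie algebra: number of roots plus the rank. -/
def dimLie : ℕ := R.Φ.card + n

end IrreducibleRootSystemData

section Helpers

variable {n : ℕ} (R : IrreducibleRootSystemData n)

private lemma pair_int (hsl : ∀ α ∈ R.Φ, ⟪α, α⟫ = 2)
    {a b : EuclideanSpace ℝ (Fin n)} (ha : a ∈ R.Φ) (hb : b ∈ R.Φ) :
    ∃ k : ℤ, ⟪a, b⟫ = (k : ℝ) := by
  obtain ⟨k, hk⟩ := R.integral b hb a ha
  refine ⟨k, ?_⟩
  rw [hsl b hb] at hk
  linarith [hk]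

private lemma pair_abs {a b : EuclideanSpace ℝ (Fin n)}
    (ha2 : ⟪a, a⟫ = 2) (hb2 : ⟪b, b⟫ = 2) : |⟪a, b⟫| ≤ 2 := by
  have h := abs_real_inner_le_norm a b
  have hna : ⟪a, a⟫ = ‖a‖ ^ 2 := real_inner_self_eq_norm_sq a
  have hnb : ⟪b, b⟫ = ‖b‖ ^ 2 := real_inner_self_eq_norm_sq b
  nlinarith [norm_nonneg a, norm_nonneg b]

private lemma not_pos (hsl : ∀ α ∈ R.Φ, ⟪α, α⟫ = 2)
    {v : EuclideanSpace ℝ (Fin n)} (hv : ⟪v, v⟫ ≠ 2) : v ∉ R.Pos :=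
  fun h => hv (hsl v (R.pos_subset h))

end Helpers
private lemma rho_int {n : ℕ} (R : IrreducibleRootSystemData n)
    (hsl : ∀ α ∈ R.Φ, ⟪α, α⟫ = 2)
    {α : EuclideanSpace ℝ (Fin n)} (hα : α ∈ R.Φ) :
    ∃ k : ℤ, ⟪α, R.weylVector⟫ = (k : ℝ) := by
  classical
  set f : EuclideanSpace ℝ (Fin n) → ℤ := fun β => round (⟪α, β⟫ : ℝ) with hfdef
  have hf : ∀ β ∈ R.Φ, ((f β : ℝ)) = ⟪α, β⟫ := by
    intro β hβ
    obtain ⟨k, hk⟩ := pair_int R hsl hα hβ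
    rw [hfdef]
    simp only
    rw [hk, round_intCast]
  have ha2 : ⟪α, α⟫ = 2 := hsl α hα
  have hodd : ∀ β ∈ R.Φ, Odd (f β) → ⟪α, β⟫ = 1 ∨ ⟪α, β⟫ = -1 := by
    intro β hβ ho
    have h2 := pair_abs (hsl α hα) (hsl β hβ)
    rw [← hf β hβ, ← Int.cast_abs] at h2
    have h3 : |f β| ≤ 2 := by exact_mod_cast h2
    obtain ⟨t, ht⟩ := ho
    have h3' := abs_le.mp h3
    have h4 : f β = 1 ∨ f β = -1 := by omega
    rcases h4 with h | h
    · left; rw [← hf β hβ, h]; norm_num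
    · right; rw [← hf β hβ, h]; norm_num
  set g : EuclideanSpace ℝ (Fin n) → EuclideanSpace ℝ (Fin n) := fun v =>
    if Odd (f v) then
      (if α - v ∈ R.Pos then α - v
       else if v - α ∈ R.Pos then v - α
       else if α + v ∈ R.Pos then α + v else -α - v)
    else v with hgdef
  have hg : ∀ v, g v = if Odd (f v) then
      (if α - v ∈ R.Pos then α - v
       else if v - α ∈ R.Pos then v - α
       else if α + v ∈ R.Pos then α + v else -α - v)
    else v := fun v => rfl
  have main : ∀ β ∈ R.Pos, Odd (f β) →
      g β ∈ R.Pos ∧ Odd (f (g β)) ∧ g (g β) = β ∧ g β ≠ β := by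
    intro β hβ ho
    have hβΦ : β ∈ R.Φ := R.pos_subset hβ
    have hb2 : ⟪β, β⟫ = 2 := hsl β hβΦ
    have hnegβ : -β ∉ R.Pos := (R.pos_iff β hβΦ).mp hβ
    rcases hodd β hβΦ ho with hc | hc
    · -- case ⟪α, β⟫ = 1
      have hba : ⟪β, α⟫ = 1 := by rw [real_inner_comm]; exact hc
      have hsubΦ : β - α ∈ R.Φ := by
        have h0 := R.reflect_mem α hα β hβΦ
        have hco : 2 * ⟪β, α⟫ / ⟪α, α⟫ = 1 := by rw [hba, ha2]; norm_num
        rwa [hco, one_smul] at h0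
      have hsubΦ' : α - β ∈ R.Φ := by
        have := R.neg_mem _ hsubΦ; rwa [neg_sub] at this
      have hd : α - β ∈ R.Pos ↔ β - α ∉ R.Pos := by
        have := R.pos_iff (α - β) hsubΦ'; rwa [neg_sub] at this
      by_cases hP1 : α - β ∈ R.Pos
      · have hgβ : g β = α - β := by rw [hg β, if_pos ho, if_pos hP1]
        have hγc : ⟪α, α - β⟫ = 1 := by
          rw [inner_sub_right, ha2, hc]; norm_num
        have hγf : f (α - β) = 1 := by
          have h5 := hf _ hsubΦ'
          rw [hγc] at h5; exact_mod_cast h5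
        have hoγ : Odd (f (α - β)) := by rw [hγf]; exact odd_one
        have hgg : g (α - β) = β := by
          rw [hg (α - β), if_pos hoγ]
          have e : α - (α - β) = β := by abel
          rw [e, if_pos hβ]
        refine ⟨hgβ ▸ hP1, hgβ ▸ hoγ, by rw [hgβ, hgg], ?_⟩
        rw [hgβ]
        intro hEq
        have h6 : α = β + β := eq_add_of_sub_eq hEq
        have h7 : ⟪β + β, β + β⟫ = 2 := by rw [← h6]; exact ha2
        simp only [inner_add_left, inner_add_right] at h7
        linarith
      · have hP2 : β - α ∈ R.Pos := by
          by_contra h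
          exact hP1 (hd.mpr h)
        have hgβ : g β = β - α := by rw [hg β, if_pos ho, if_neg hP1, if_pos hP2]
        have hγc : ⟪α, β - α⟫ = -1 := by
          rw [inner_sub_right, ha2, hc]; norm_num
        have hγf : f (β - α) = -1 := by
          have h5 := hf _ hsubΦ
          rw [hγc] at h5; exact_mod_cast h5
        have hoγ : Odd (f (β - α)) := by rw [hγf]; exact ⟨-1, by norm_num⟩
        have hn1 : α - (β - α) ∉ R.Pos := by
          apply not_pos R hsl
          intro hEq
          simp only [inner_sub_left, inner_sub_right] at hEq
          linarith
        have hn2 : (β - α) - α ∉ R.Pos := by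
          apply not_pos R hsl
          intro hEq
          simp only [inner_sub_left, inner_sub_right] at hEq
          linarith
        have hgg : g (β - α) = β := by
          rw [hg (β - α), if_pos hoγ, if_neg hn1, if_neg hn2]
          have e : α + (β - α) = β := by abel
          rw [e, if_pos hβ]
        refine ⟨hgβ ▸ hP2, hgβ ▸ hoγ, by rw [hgβ, hgg], ?_⟩
        rw [hgβ]
        intro hEq
        have h6 : α = 0 := sub_eq_self.mp hEq
        exact R.zero_not_mem (h6 ▸ hα)
    · -- case ⟪α, β⟫ = -1
      have hba : ⟪β, α⟫ = -1 := by rw [real_inner_comm]; exact hc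
      have haddΦ : α + β ∈ R.Φ := by
        have h0 := R.reflect_mem α hα β hβΦ
        have hco : 2 * ⟪β, α⟫ / ⟪α, α⟫ = -1 := by rw [hba, ha2]; norm_num
        rw [hco, neg_one_smul, sub_neg_eq_add] at h0
        rwa [add_comm] at h0
      have hd : α + β ∈ R.Pos ↔ -α - β ∉ R.Pos := by
        have h1 := R.pos_iff (α + β) haddΦ
        have e : -(α + β) = -α - β := by abel
        rwa [e] at h1
      have hn1 : α - β ∉ R.Pos := by
        apply not_pos R hsl
        intro hEq
        simp only [inner_sub_left, inner_sub_right] at hEq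
        linarith
      have hn2 : β - α ∉ R.Pos := by
        apply not_pos R hsl
        intro hEq
        simp only [inner_sub_left, inner_sub_right] at hEq
        linarith
      by_cases hP3 : α + β ∈ R.Pos
      · have hgβ : g β = α + β := by
          rw [hg β, if_pos ho, if_neg hn1, if_neg hn2, if_pos hP3]
        have hγc : ⟪α, α + β⟫ = 1 := by
          rw [inner_add_right, ha2, hc]; norm_num
        have hγf : f (α + β) = 1 := by
          have h5 := hf _ haddΦ
          rw [hγc] at h5; exact_mod_cast h5
        have hoγ : Odd (f (α + β)) := by rw [hγf]; exact odd_one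
        have hgg : g (α + β) = β := by
          rw [hg (α + β), if_pos hoγ]
          have e1 : α - (α + β) = -β := by abel
          have e2 : α + β - α = β := by abel
          rw [e1, if_neg hnegβ, e2, if_pos hβ]
        refine ⟨hgβ ▸ hP3, hgβ ▸ hoγ, by rw [hgβ, hgg], ?_⟩
        rw [hgβ]
        intro hEq
        have h6 : α + β = 0 + β := by rw [zero_add]; exact hEq
        have h7 : α = 0 := add_right_cancel h6
        exact R.zero_not_mem (h7 ▸ hα)
      · have hP4 : -α - β ∈ R.Pos := by
          by_contra h
          exact hP3 (hd.mpr h)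
        have hgβ : g β = -α - β := by
          rw [hg β, if_pos ho, if_neg hn1, if_neg hn2, if_neg hP3]
        have hγc : ⟪α, -α - β⟫ = -1 := by
          rw [inner_sub_right, inner_neg_right, ha2, hc]; norm_num
        have hnegaddΦ : -α - β ∈ R.Φ := by
          have := R.neg_mem _ haddΦ
          have e : -(α + β) = -α - β := by abel
          rwa [e] at this
        have hγf : f (-α - β) = -1 := by
          have h5 := hf _ hnegaddΦ
          rw [hγc] at h5; exact_mod_cast h5
        have hoγ : Odd (f (-α - β)) := by rw [hγf]; exact ⟨-1, by norm_num⟩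
        have hm1 : α - (-α - β) ∉ R.Pos := by
          apply not_pos R hsl
          intro hEq
          simp only [inner_sub_left, inner_sub_right, inner_neg_left, inner_neg_right] at hEq
          linarith
        have hm2 : (-α - β) - α ∉ R.Pos := by
          apply not_pos R hsl
          intro hEq
          simp only [inner_sub_left, inner_sub_right, inner_neg_left, inner_neg_right] at hEq
          linarith
        have hgg : g (-α - β) = β := by
          rw [hg (-α - β), if_pos hoγ, if_neg hm1, if_neg hm2]
          have e3 : α + (-α - β) = -β := by abel
          have e4 : -α - (-α - β) = β := by abel
          rw [e3, if_neg hnegβ, e4]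
        refine ⟨hgβ ▸ hP4, hgβ ▸ hoγ, by rw [hgβ, hgg], ?_⟩
        rw [hgβ]
        intro hEq
        have h6 : -α = β + β := eq_add_of_sub_eq hEq
        have h7 : ⟪β + β, β + β⟫ = 2 := by
          rw [← h6]
          simp only [inner_neg_left, inner_neg_right, neg_neg]
          exact ha2
        simp only [inner_add_left, inner_add_right] at h7
        linarith
  have castodd : ∀ k : ℤ, Odd k → ((k : ZMod 2)) = 1 := by
    intro k hk
    obtain ⟨t, rfl⟩ := hk
    push_cast
    rw [show ((2:ZMod 2)) = 0 from rfl]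
    ring
  have casteven : ∀ k : ℤ, ¬ Odd k → ((k : ZMod 2)) = 0 := by
    intro k hk
    rw [Int.not_odd_iff_even] at hk
    obtain ⟨t, rfl⟩ := hk
    push_cast
    rw [show ((t:ZMod 2)) + t = 2 * t from by ring, show ((2:ZMod 2)) = 0 from rfl]
    ring
  have key : ∑ β ∈ R.Pos, ((f β : ZMod 2)) = 0 := by
    refine Finset.sum_involution (fun β _ => g β) ?_ ?_ ?_ ?_
    · intro β hβ
      show ((f β : ZMod 2)) + ((f (g β) : ZMod 2)) = 0
      by_cases ho : Odd (f β)
      · obtain ⟨_, ho2, _, _⟩ := main β hβ ho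
        rw [castodd _ ho, castodd _ ho2]; decide
      · have e : g β = β := by rw [hg β, if_neg ho]
        rw [e, casteven _ ho]; decide
    · intro β hβ hne
      show g β ≠ β
      by_cases ho : Odd (f β)
      · exact (main β hβ ho).2.2.2
      · exact absurd (casteven _ ho) hne
    · intro β hβ
      show g β ∈ R.Pos
      by_cases ho : Odd (f β)
      · exact (main β hβ ho).1
      · have e : g β = β := by rw [hg β, if_neg ho]
        rw [e]; exact hβ
    · intro β hβ
      show g (g β) = β
      by_cases ho : Odd (f β)
      · exact (main β hβ ho).2.2.1
      · have e : g β = β := by rw [hg β, if_neg ho]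
        rw [e]; exact e
  have hdvd : (2:ℤ) ∣ ∑ β ∈ R.Pos, f β := by
    have h1 : ((∑ β ∈ R.Pos, f β : ℤ) : ZMod 2) = 0 := by push_cast; exact key
    exact_mod_cast (ZMod.intCast_zmod_eq_zero_iff_dvd _ 2).mp h1
  obtain ⟨t, ht⟩ := hdvd
  refine ⟨t, ?_⟩
  rw [IrreducibleRootSystemData.weylVector, real_inner_smul_right, inner_sum]
  have h2 : ∑ β ∈ R.Pos, ⟪α, β⟫ = ((∑ β ∈ R.Pos, f β : ℤ) : ℝ) := by
    push_cast
    exact Finset.sum_congr rfl (fun β hβ => (hf β (R.pos_subset hβ)).symm)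
  rw [h2, ht]
  push_cast
  ring
private lemma theta_pair_nonneg {n : ℕ} (R : IrreducibleRootSystemData n)
    (hsl : ∀ α ∈ R.Φ, ⟪α, α⟫ = 2)
    {β : EuclideanSpace ℝ (Fin n)} (hβ : β ∈ R.Pos) : 0 ≤ ⟪β, R.θ⟫ := by
  have hθΦ : R.θ ∈ R.Φ := R.pos_subset R.θ_mem
  have hβΦ : β ∈ R.Φ := R.pos_subset hβ
  have hb2 : ⟪β, β⟫ = 2 := hsl β hβΦ
  obtain ⟨k, hk⟩ := pair_int R hsl hβΦ hθΦ
  by_contra hneg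
  push_neg at hneg
  have habs := pair_abs hb2 R.θ_long
  rw [hk, ← Int.cast_abs] at habs
  have h3 : |k| ≤ 2 := by exact_mod_cast habs
  have hkneg : k < 0 := by
    have : ((k:ℝ)) < 0 := by rw [← hk]; exact hneg
    exact_mod_cast this
  have h3' := abs_le.mp h3
  have h4 : k = -1 ∨ k = -2 := by omega
  rcases h4 with h | h
  · -- reflection gives θ + β ∈ Φ, contradicting highest
    have h0 := R.reflect_mem β hβΦ R.θ hθΦ
    have hco : 2 * ⟪R.θ, β⟫ / ⟪β, β⟫ = -1 := by
      rw [real_inner_comm, hk, h, hb2]; norm_num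
    rw [hco, neg_one_smul, sub_neg_eq_add] at h0
    exact R.θ_highest β hβ h0
  · -- β = -θ, impossible since β positive
    have h5 : ⟪R.θ + β, R.θ + β⟫ = 0 := by
      have hbt : ⟪β, R.θ⟫ = -2 := by rw [hk, h]; norm_num
      have htb : ⟪R.θ, β⟫ = -2 := by rw [real_inner_comm]; exact hbt
      simp only [inner_add_left, inner_add_right]
      rw [R.θ_long, hb2, hbt, htb]; ring
    have h6 : R.θ + β = 0 := inner_self_eq_zero.mp h5
    have h7 : β = -R.θ := by
      have := eq_neg_of_add_eq_zero_right h6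
      rwa [] at this
    have h8 : -R.θ ∉ R.Pos := (R.pos_iff R.θ hθΦ).mp R.θ_mem
    exact h8 (h7 ▸ hβ)

private lemma rho_theta_ge_one {n : ℕ} (R : IrreducibleRootSystemData n)
    (hsl : ∀ α ∈ R.Φ, ⟪α, α⟫ = 2) : (1:ℝ) ≤ ⟪R.weylVector, R.θ⟫ := by
  rw [IrreducibleRootSystemData.weylVector, real_inner_smul_left, sum_inner]
  have h1 : ⟪R.θ, R.θ⟫ ≤ ∑ β ∈ R.Pos, ⟪β, R.θ⟫ :=
    Finset.single_le_sum (fun β hβ => theta_pair_nonneg R hsl hβ) R.θ_mem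
  rw [R.θ_long] at h1
  linarith


/-- for a simply-laced simple Lie algebra `g`, the inner automorphism
`exp(ad_{2πi·ρ/h∨})` has order exactly `h∨`. It acts trivially on the Cartan subalgebra
and on each root space `g_α` by the scalar `e^{2πi(α,ρ)/h∨}`, so its order is the least
positive `N` with `(e^{2πi(α,ρ)/h∨})^N = 1` for all roots `α`; this least `N` is `h∨`.
(For `sl₂ = A₁` this gives order exactly `2 = h∨`.) -/
theorem order_of_exp_ad_weyl (n : ℕ) (R : IrreducibleRootSystemData n)
    (hsl : ∀ α ∈ R.Φ, ⟪α, α⟫ = 2) :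
    ∃ p : ℕ, (p : ℝ) = R.dualCoxeter ∧
      IsLeast {N : ℕ | 0 < N ∧ ∀ α ∈ R.Φ,
        (Complex.exp (2 * Real.pi * Complex.I *
          ((⟪α, R.weylVector⟫ / R.dualCoxeter : ℝ) : ℂ))) ^ N = 1} p := by
  classical
  have hθΦ : R.θ ∈ R.Φ := R.pos_subset R.θ_mem
  obtain ⟨m, hm⟩ := rho_int R hsl hθΦ
  have hρθ : ⟪R.weylVector, R.θ⟫ = (m:ℝ) := by rw [real_inner_comm]; exact hm
  have hge := rho_theta_ge_one R hsl
  have hm1 : 1 ≤ m := by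
    have : (1:ℝ) ≤ (m:ℝ) := by rw [← hρθ]; exact hge
    exact_mod_cast this
  set p : ℕ := m.toNat + 1 with hpdef
  have hpm : ((p:ℤ)) = m + 1 := by
    rw [hpdef]; push_cast; rw [Int.toNat_of_nonneg (by omega)]
  have hdc : R.dualCoxeter = (p:ℝ) := by
    rw [IrreducibleRootSystemData.dualCoxeter, hρθ]
    have : ((p:ℤ):ℝ) = (m:ℝ) + 1 := by exact_mod_cast hpm
    push_cast at this ⊢
    linarith
  have hppos : 0 < p := Nat.succ_pos _
  have hpR : ((p:ℝ)) ≠ 0 := by positivity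
  have hpC : ((p:ℂ)) ≠ 0 := Nat.cast_ne_zero.mpr (by omega)
  clear_value p
  refine ⟨p, hdc.symm, ⟨⟨hppos, ?_⟩, ?_⟩⟩
  · -- p is in the set
    intro α hα
    obtain ⟨k, hk⟩ := rho_int R hsl hα
    rw [← Complex.exp_nat_mul]
    have heq : (p:ℂ) * (2 * Real.pi * Complex.I *
        ((⟪α, R.weylVector⟫ / R.dualCoxeter : ℝ) : ℂ)) = (k:ℂ) * (2 * Real.pi * Complex.I) := by
      rw [hk, hdc]
      push_cast
      field_simp
    rw [heq]
    exact Complex.exp_int_mul_two_pi_mul_I k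
  · -- lower bound
    intro N hN
    obtain ⟨hN0, hNall⟩ := hN
    have hNθ := hNall R.θ hθΦ
    rw [← Complex.exp_nat_mul] at hNθ
    obtain ⟨j, hj⟩ := Complex.exp_eq_one_iff.mp hNθ
    have hc : ((N:ℂ) * ((⟪R.θ, R.weylVector⟫ / R.dualCoxeter : ℝ) : ℂ) - (j:ℂ)) *
        (2 * Real.pi * Complex.I) = 0 := by linear_combination hj
    have hπ : ((2:ℂ) * Real.pi * Complex.I) ≠ 0 := by
      simp [Real.pi_ne_zero, Complex.I_ne_zero]
    have hc2 : (N:ℂ) * ((⟪R.θ, R.weylVector⟫ / R.dualCoxeter : ℝ) : ℂ) = (j:ℂ) := by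
      rcases mul_eq_zero.mp hc with h | h
      · exact sub_eq_zero.mp h
      · exact absurd h hπ
    have hval : ((⟪R.θ, R.weylVector⟫ / R.dualCoxeter : ℝ)) = (m:ℝ)/(p:ℝ) := by
      rw [hm, hdc]
    rw [hval] at hc2
    have hreal : (N:ℝ) * ((m:ℝ)/(p:ℝ)) = (j:ℝ) := by exact_mod_cast hc2
    have hmul : (N:ℝ) * (m:ℝ) = (j:ℝ) * (p:ℝ) := by
      field_simp at hreal; linarith
    have hint : (N:ℤ) * m = j * (p:ℤ) := by exact_mod_cast hmul
    have hdvd : (p:ℤ) ∣ (N:ℤ) * m := ⟨j, by rw [hint]; ring⟩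
    have hmnat : m = ((p - 1 : ℕ) : ℤ) := by omega
    have hdvdN : (p:ℤ) ∣ (N:ℤ) * ((p-1:ℕ):ℤ) := hmnat ▸ hdvd
    have hdvdn : p ∣ N * (p - 1) := by exact_mod_cast hdvdN
    have hcop : Nat.Coprime p (p - 1) := by
      have hsucc : p - 1 + 1 = p := by omega
      rw [← hsucc]
      simp [Nat.coprime_comm, Nat.coprime_add_self_left]
    exact Nat.le_of_dvd hN0 (hcop.dvd_of_dvd_mul_right hdvdn)
end

section
/- Let g be a finite-order automorphism of a finite-dimensional complex vector space V with rational characteristic polynomial of order m. Then there exist integers b_t (t ∣ m) such that the characteristic polynomial of g equals ∏_{t∣m}(x^t − 1)^{b_t}. -/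
open Polynomial Finset

-- zpow helpers in a CommGroupWithZero
lemma my_zpow_mul₀ {G₀ : Type*} [CommGroupWithZero G₀] {x : G₀} (hx : x ≠ 0) (k l : ℤ) :
    x ^ (k * l) = (x ^ k) ^ l := by
  lift x to G₀ˣ using isUnit_iff_ne_zero.mpr hx
  rw [← Units.val_zpow_eq_zpow_val, ← Units.val_zpow_eq_zpow_val, ← Units.val_zpow_eq_zpow_val,
    zpow_mul]

lemma my_zpow_sum₀ {G₀ : Type*} [CommGroupWithZero G₀] {x : G₀} (hx : x ≠ 0)
    {ι : Type*} (s : Finset ι) (f : ι → ℤ) :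
    x ^ (∑ i ∈ s, f i) = ∏ i ∈ s, x ^ f i := by
  classical
  induction s using Finset.induction with
  | empty => simp
  | insert _ _ hni ih =>
    rw [Finset.sum_insert hni, Finset.prod_insert hni, zpow_add₀ hx, ih]

-- monic polynomial dividing a product of powers of monic irreducibles
lemma monic_dvd_prod_pow {K : Type*} [Field K] (s : Finset ℕ) (q : ℕ → K[X]) (nn : ℕ)
    (hqm : ∀ i ∈ s, (q i).Monic) (hqi : ∀ i ∈ s, Irreducible (q i)) :
    ∀ N (p : K[X]), p.natDegree ≤ N → p.Monic → p ∣ ∏ i ∈ s, q i ^ nn →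
      ∃ a : ℕ → ℕ, p = ∏ i ∈ s, q i ^ a i := by
  classical
  intro N
  induction N with
  | zero =>
    intro p hdeg hmon _
    exact ⟨fun _ => 0, by simpa using (hmon.natDegree_eq_zero.mp (Nat.le_zero.mp hdeg))⟩
  | succ N ih =>
    intro p hdeg hmon hdvd
    by_cases h0 : p.natDegree = 0
    · exact ⟨fun _ => 0, by simpa using hmon.natDegree_eq_zero.mp h0⟩
    · have hpu : ¬ IsUnit p := fun hu => h0 (natDegree_eq_zero_of_isUnit hu)
      obtain ⟨r, hr_irr, hr_dvd⟩ :=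
        WfDvdMonoid.exists_irreducible_factor hpu hmon.ne_zero
      have hr_prime : Prime r := hr_irr.prime
      obtain ⟨i, his, hri⟩ := hr_prime.exists_mem_finset_dvd (hr_dvd.trans hdvd)
      have hri' : r ∣ q i := hr_prime.dvd_of_dvd_pow hri
      have hassoc : Associated r (q i) := hr_irr.associated_of_dvd (hqi i his) hri'
      obtain ⟨p', rfl⟩ : q i ∣ p := hassoc.symm.dvd.trans hr_dvd
      have hqmon := hqm i his
      have hp'mon : p'.Monic := hqmon.of_mul_monic_left hmon
      have hqdegpos : 0 < (q i).natDegree := by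
        rcases Nat.eq_zero_or_pos (q i).natDegree with h | h
        · exact absurd (hqmon.natDegree_eq_zero.mp h) (hqi i his).ne_one
        · exact h
      have hp'deg : p'.natDegree ≤ N := by
        have := hqmon.natDegree_mul hp'mon
        omega
      have hp'dvd : p' ∣ ∏ i ∈ s, q i ^ nn := (Dvd.intro_left (q i) rfl).trans hdvd
      obtain ⟨a, ha⟩ := ih p' hp'deg hp'mon hp'dvd
      refine ⟨fun j => a j + if j = i then 1 else 0, ?_⟩
      have h1 : (∏ j ∈ s, q j ^ (a j + if j = i then 1 else 0)) =
          (∏ j ∈ s, q j ^ a j) * ∏ j ∈ s, q j ^ (if j = i then 1 else 0) := by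
        rw [← Finset.prod_mul_distrib]
        exact Finset.prod_congr rfl fun j _ => pow_add _ _ _
      rw [h1, ← ha]
      have h2 : (∏ j ∈ s, q j ^ (if j = i then 1 else 0)) = q i := by
        have h3 : ∀ j ∈ s, q j ^ (if j = i then 1 else 0) = (if j = i then q j else 1) := by
          intro j _; split <;> simp
        rw [Finset.prod_congr rfl h3, Finset.prod_ite_eq' s i q, if_pos his]
      rw [h2, mul_comm]

lemma charpoly_root_pow_eq_one
    {V : Type*} [AddCommGroup V] [Module ℂ V] [FiniteDimensional ℂ V]
    (g : V ≃ₗ[ℂ] V) (m : ℕ) (hgm : g ^ m = 1) {lam : ℂ}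
    (hl : (LinearMap.charpoly g.toLinearMap).IsRoot lam) : lam ^ m = 1 := by
  classical
  set f := g.toLinearMap with hf
  let b := Module.Free.chooseBasis ℂ V
  set M := LinearMap.toMatrix b b f with hM
  have h1 : (M.charpoly).eval lam = 0 := by
    rw [hM, LinearMap.charpoly_toMatrix]; exact hl
  have h2 : (Matrix.scalar _ lam - M).det = 0 := by
    rw [Matrix.charpoly, eval_det, Matrix.matPolyEquiv_charmatrix] at h1
    simpa using h1
  have h3 : LinearMap.det (lam • (LinearMap.id : V →ₗ[ℂ] V) - f) = 0 := by
    rw [← LinearMap.det_toMatrix b]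
    have : LinearMap.toMatrix b b (lam • (LinearMap.id : V →ₗ[ℂ] V) - f) =
        Matrix.scalar _ lam - M := by
      rw [map_sub, map_smul, LinearMap.toMatrix_id]
      congr 1
      ext i j
      simp [Matrix.scalar_apply, Matrix.smul_apply, Matrix.one_apply, Matrix.diagonal_apply]
    rw [this]; exact h2
  obtain ⟨v, hvker, hvne⟩ := SetLike.exists_of_lt (LinearMap.bot_lt_ker_of_det_eq_zero h3)
  have hv0 : v ≠ 0 := by simpa using hvne
  have hfv : g v = lam • v := by
    have h := LinearMap.mem_ker.mp hvker
    simp only [LinearMap.sub_apply, LinearMap.smul_apply, LinearMap.id_apply] at h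
    have h' : lam • v - f v = 0 := h
    have := sub_eq_zero.mp h'
    exact this.symm
  have hk : ∀ k : ℕ, (g ^ k) v = lam ^ k • v := by
    intro k; induction k with
    | zero => simp
    | succ k ih =>
      rw [pow_succ]
      have hmul : (g ^ k * g) v = (g ^ k) (g v) := rfl
      rw [hmul, hfv, map_smul, ih, smul_smul, pow_succ]
      ring_nf
  have hmv := hk m
  rw [hgm] at hmv
  have hveq : v = lam ^ m • v := by simpa using hmv
  have h5 : (lam ^ m - 1) • v = 0 := by rw [sub_smul, one_smul, ← hveq, sub_self]
  rcases smul_eq_zero.mp h5 with h | h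
  · exact sub_eq_zero.mp h
  · exact absurd h hv0
open scoped ArithmeticFunction ArithmeticFunction.Moebius

/-- a finite-order automorphism `g` of order `m` of a finite-dimensional
complex vector space whose characteristic polynomial has rational coefficients has a
cycle shape: there are integers `b_t` (`t ∣ m`) with characteristic polynomial
`∏_{t ∣ m}(x^t - 1)^{b_t}` (an identity of rational functions, negative `b_t` allowed). -/
theorem exists_cycle_shape_of_rational_charpoly
    (V : Type*) [AddCommGroup V] [Module ℂ V] [FiniteDimensional ℂ V]
    (g : V ≃ₗ[ℂ] V) (m : ℕ) (hm : 0 < m) (hgm : g ^ m = 1)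
    (hmin : ∀ k : ℕ, 0 < k → k < m → g ^ k ≠ 1)
    (hrat : ∀ i : ℕ, ∃ q : ℚ, (LinearMap.charpoly g.toLinearMap).coeff i = (q : ℂ)) :
    ∃ b : ℕ → ℤ,
      algebraMap (Polynomial ℂ) (RatFunc ℂ) (LinearMap.charpoly g.toLinearMap) =
        ∏ t ∈ m.divisors, ((RatFunc.X : RatFunc ℂ) ^ t - 1) ^ (b t) := by
  classical
  set χ := LinearMap.charpoly g.toLinearMap with hχ
  have hmon : χ.Monic := LinearMap.charpoly_monic _
  set n := χ.natDegree with hn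
  -- Step C : χ ∣ (X^m-1)^n over ℂ
  have hsplit : χ.Splits := IsAlgClosed.splits χ
  have hcard : χ.roots.card = n := (splits_iff_card_roots).mp hsplit
  have hprod : χ = (χ.roots.map fun a => X - C a).prod :=
    hsplit.eq_prod_roots_of_monic hmon
  have hdvdC : χ ∣ ((X : ℂ[X]) ^ m - 1) ^ n := by
    have hstep := Multiset.prod_dvd_prod_of_dvd (S := χ.roots)
      (fun a => X - C a) (fun _ => (X : ℂ[X]) ^ m - 1) ?_
    · rw [← hprod] at hstep
      have hconst : (χ.roots.map fun _ => (X : ℂ[X]) ^ m - 1).prod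
          = ((X : ℂ[X]) ^ m - 1) ^ n := by
        rw [Multiset.map_const', Multiset.prod_replicate, hcard]
      rwa [hconst] at hstep
    · intro a ha
      refine dvd_iff_isRoot.mpr ?_
      have hroot : a ^ m = 1 := charpoly_root_pow_eq_one g m hgm (isRoot_of_mem_roots ha)
      simp [Polynomial.IsRoot, hroot]
  -- Step D : descend to ℚ
  have hlifts : χ ∈ Polynomial.lifts (algebraMap ℚ ℂ) := by
    rw [lifts_iff_coeff_lifts]
    intro i
    obtain ⟨q, hq⟩ := hrat i
    exact ⟨q, by rw [eq_ratCast (algebraMap ℚ ℂ) q, ← hq]⟩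
  obtain ⟨p, hpmap, _, hpmon⟩ := lifts_and_degree_eq_and_monic hlifts hmon
  have hpdvd : p ∣ ((X : ℚ[X]) ^ m - 1) ^ n := by
    rw [← map_dvd_map' (algebraMap ℚ ℂ)]
    rw [hpmap, Polynomial.map_pow, Polynomial.map_sub, Polynomial.map_pow, Polynomial.map_X,
      Polynomial.map_one]
    exact hdvdC
  -- Step E : factor p into cyclotomic polynomials
  have hQ : ((X : ℚ[X]) ^ m - 1) ^ n = ∏ d ∈ m.divisors, cyclotomic d ℚ ^ n := by
    rw [← prod_cyclotomic_eq_X_pow_sub_one hm ℚ, ← Finset.prod_pow]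
  obtain ⟨a, hpa⟩ := monic_dvd_prod_pow m.divisors (fun d => cyclotomic d ℚ) n
    (fun i _ => cyclotomic.monic i ℚ)
    (fun i hi => cyclotomic.irreducible_rat (Nat.pos_of_mem_divisors hi))
    p.natDegree p le_rfl hpmon (by rw [← hQ]; exact hpdvd)
  -- Step F : assemble in RatFunc ℂ
  have hχfac : χ = ∏ d ∈ m.divisors, cyclotomic d ℂ ^ a d := by
    rw [← hpmap, hpa, Polynomial.map_prod]
    exact Finset.prod_congr rfl fun d _ => by rw [Polynomial.map_pow, map_cyclotomic]
  set φ := algebraMap ℂ[X] (RatFunc ℂ) with hφ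
  set u : ℕ → RatFunc ℂ := fun t => (RatFunc.X : RatFunc ℂ) ^ t - 1 with hu
  have huφ : ∀ t : ℕ, φ ((X : ℂ[X]) ^ t - 1) = u t := by
    intro t
    rw [hφ, map_sub, map_pow, map_one, RatFunc.algebraMap_X, hu]
  have hune : ∀ t : ℕ, t ≠ 0 → u t ≠ 0 := by
    intro t ht
    rw [← huφ t, hφ, Ne, IsFractionRing.to_map_eq_zero_iff]
    intro hcon
    have hne := (monic_X_pow_sub_C (1 : ℂ) ht).ne_zero
    rw [map_one] at hne
    exact hne hcon
  refine ⟨fun t => ∑ e ∈ (m / t).divisors, (μ e) * (a (e * t) : ℤ), ?_⟩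
  have hgoal : φ χ = ∏ t ∈ m.divisors,
      u t ^ (∑ e ∈ (m / t).divisors, (μ e) * (a (e * t) : ℤ)) := by
    calc φ χ = ∏ d ∈ m.divisors, φ (cyclotomic d ℂ) ^ (a d) := by
          rw [hχfac, map_prod]
          exact Finset.prod_congr rfl fun d _ => map_pow _ _ _
      _ = ∏ d ∈ m.divisors, ∏ t ∈ d.divisors, u t ^ ((μ (d / t)) * (a d : ℤ)) := by
          refine Finset.prod_congr rfl fun d hd => ?_
          rw [hφ, cyclotomic_eq_prod_X_pow_sub_one_pow_moebius ℂ,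
            Nat.prod_divisorsAntidiagonal'
              (f := fun i j => algebraMap ℂ[X] (RatFunc ℂ) ((X : ℂ[X]) ^ j - 1) ^ (μ i)),
            ← Finset.prod_pow]
          refine Finset.prod_congr rfl fun t ht => ?_
          have ht0 : t ≠ 0 := (Nat.pos_of_mem_divisors ht).ne'
          rw [← hφ, huφ t, ← zpow_natCast (u t ^ (μ (d / t))) (a d),
            ← my_zpow_mul₀ (hune t ht0)]
      _ = ∏ t ∈ m.divisors, ∏ e ∈ (m / t).divisors, u t ^ ((μ e) * (a (e * t) : ℤ)) := by
          rw [Finset.prod_sigma' (m.divisors) (fun d => d.divisors)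
              (fun d t => u t ^ ((μ (d / t)) * (a d : ℤ))),
            Finset.prod_sigma' (m.divisors) (fun t => (m / t).divisors)
              (fun t e => u t ^ ((μ e) * (a (e * t) : ℤ)))]
          refine Finset.prod_bij' (fun x _ => ⟨x.2, x.1 / x.2⟩) (fun y _ => ⟨y.2 * y.1, y.1⟩)
            ?_ ?_ ?_ ?_ ?_
          · rintro ⟨d, t⟩ hx
            rw [Finset.mem_sigma] at hx ⊢
            obtain ⟨hd, ht⟩ := hx
            dsimp only at hd ht ⊢
            obtain ⟨hdm, hm0⟩ := Nat.mem_divisors.mp hd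
            obtain ⟨htd, hd0⟩ := Nat.mem_divisors.mp ht
            have ht0 : 0 < t := Nat.pos_of_dvd_of_pos htd (Nat.pos_of_ne_zero hd0)
            constructor
            · exact Nat.mem_divisors.mpr ⟨htd.trans hdm, hm0⟩
            · obtain ⟨k, hk⟩ := hdm
              obtain ⟨e, he⟩ := htd
              refine Nat.mem_divisors.mpr ⟨?_, ?_⟩
              · have hmt : m / t = e * k := by
                  rw [hk, he, mul_assoc, Nat.mul_div_cancel_left _ ht0]
                have hdt : d / t = e := by rw [he, Nat.mul_div_cancel_left _ ht0]
                rw [hmt, hdt]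
                exact Dvd.intro k rfl
              · have h1 : t ∣ m := by rw [hk, he]; exact Dvd.dvd.mul_right (Dvd.intro e rfl) k
                have h2 : 0 < m / t :=
                  Nat.div_pos (Nat.le_of_dvd (Nat.pos_of_ne_zero hm0) h1) ht0
                omega
          · rintro ⟨t, e⟩ hy
            rw [Finset.mem_sigma] at hy ⊢
            obtain ⟨ht, he⟩ := hy
            dsimp only at ht he ⊢
            obtain ⟨htm, hm0⟩ := Nat.mem_divisors.mp ht
            obtain ⟨hemt, hmt0⟩ := Nat.mem_divisors.mp he
            have ht0 : 0 < t := Nat.pos_of_dvd_of_pos htm (Nat.pos_of_ne_zero hm0)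
            have he0 : 0 < e := Nat.pos_of_dvd_of_pos hemt (Nat.pos_of_ne_zero hmt0)
            constructor
            · refine Nat.mem_divisors.mpr ⟨?_, hm0⟩
              have h1 : e * t ∣ (m / t) * t := mul_dvd_mul_right hemt t
              rwa [Nat.div_mul_cancel htm] at h1
            · exact Nat.mem_divisors.mpr ⟨dvd_mul_left t e, by positivity⟩
          · rintro ⟨d, t⟩ hx
            rw [Finset.mem_sigma] at hx
            obtain ⟨htd, _⟩ := Nat.mem_divisors.mp hx.2
            dsimp only
            have h1 : d / t * t = d := Nat.div_mul_cancel htd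
            simp only [h1]
          · rintro ⟨t, e⟩ hy
            rw [Finset.mem_sigma] at hy
            obtain ⟨htm, hm0⟩ := Nat.mem_divisors.mp hy.1
            have ht0 : 0 < t := Nat.pos_of_dvd_of_pos htm (Nat.pos_of_ne_zero hm0)
            dsimp only
            have h1 : e * t / t = e := Nat.mul_div_cancel e ht0
            simp only [h1]
          · rintro ⟨d, t⟩ hx
            rw [Finset.mem_sigma] at hx
            obtain ⟨htd, _⟩ := Nat.mem_divisors.mp hx.2
            dsimp only
            have h1 : d / t * t = d := Nat.div_mul_cancel htd
            rw [h1]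
      _ = ∏ t ∈ m.divisors, u t ^ (∑ e ∈ (m / t).divisors, (μ e) * (a (e * t) : ℤ)) := by
          refine Finset.prod_congr rfl fun t ht => ?_
          exact (my_zpow_sum₀ (hune t (Nat.pos_of_mem_divisors ht).ne') _ _).symm
  rw [hgoal]
end
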